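/- Let n ≥ 6 and i ∈ [n-1]. Then the maximum of d_ℓ(σ,ρ) over all pairs of distinct permutations σ, ρ ∈ D({i};n) equals n-2 if i = 1 or i = n-1, equals n-i if 2 ≤ i ≤ ⌊n/2⌋, and equals i if ⌈n/2⌉ ≤ i ≤ n-2. -/

import Mathlib

/-- `σ` is a permutation of `[n] = {1,…,n}`, written in one-line notation:
`σ j` is the `j`-th entry, for `1 ≤ j ≤ n`. -/
def IsPermOn (n : ℕ) (σ : ℕ → ℕ) : Prop :=
  Set.BijOn σ (Set.Icc 1 n) (Set.Icc 1 n)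

/-- The descent set `D(σ) = {i ∈ [n-1] | σ_i > σ_{i+1}}`. -/
def DescentSet (n : ℕ) (σ : ℕ → ℕ) : Finset ℕ :=
  (Finset.Icc 1 (n - 1)).filter fun i => σ (i + 1) < σ i

/-- `D(S;n)`, the set of permutations of `[n]` with descent set `S`. -/
def DSn (n : ℕ) (S : Finset ℕ) : Set (ℕ → ℕ) :=
  {σ | IsPermOn n σ ∧ DescentSet n σ = S}

/-- The Hamming distance `d_H(σ,ρ) = |{i ∈ [n] : σ_i ≠ ρ_i}|`. -/
def dHamming (n : ℕ) (σ ρ : ℕ → ℕ) : ℕ :=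
  ((Finset.Icc 1 n).filter fun i => σ i ≠ ρ i).card

/-- The `ℓ∞` distance `d_ℓ(σ,ρ) = max_{1 ≤ i ≤ n} |σ_i − ρ_i|`. -/
def dLinf (n : ℕ) (σ ρ : ℕ → ℕ) : ℕ :=
  (Finset.Icc 1 n).sup fun i => ((σ i : ℤ) - (ρ i : ℤ)).natAbs

/-- `σ` and `ρ` are distinct as permutations of `[n]`
(they differ at some index of `[n]`). -/
def DistinctOn (n : ℕ) (σ ρ : ℕ → ℕ) : Prop :=
  ∃ i ∈ Set.Icc 1 n, σ i ≠ ρ i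

namespace Stmt10Aux

variable {n i : ℕ} {σ ρ : ℕ → ℕ}

lemma bnds (hσ : σ ∈ DSn n {i}) {j : ℕ} (h1 : 1 ≤ j) (h2 : j ≤ n) :
    1 ≤ σ j ∧ σ j ≤ n := hσ.1.1 ⟨h1, h2⟩

lemma inj (hσ : σ ∈ DSn n {i}) {a b : ℕ} (ha1 : 1 ≤ a) (ha2 : a ≤ n)
    (hb1 : 1 ≤ b) (hb2 : b ≤ n) (h : σ a = σ b) : a = b :=
  hσ.1.2.1 ⟨ha1, ha2⟩ ⟨hb1, hb2⟩ h

lemma step_lt (hσ : σ ∈ DSn n {i}) {j : ℕ} (h1 : 1 ≤ j) (h2 : j + 1 ≤ n)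
    (hne : j ≠ i) : σ j < σ (j + 1) := by
  have hmem : j ∉ DescentSet n σ := by rw [hσ.2]; simpa using hne
  have hnd : ¬ σ (j + 1) < σ j := fun h =>
    hmem (Finset.mem_filter.2 ⟨Finset.mem_Icc.2 ⟨h1, by omega⟩, h⟩)
  have hne' : σ j ≠ σ (j + 1) := by
    intro h
    have := inj hσ h1 (by omega) (by omega) h2 h
    omega
  omega

lemma desc_i (hσ : σ ∈ DSn n {i}) : σ (i + 1) < σ i := by
  have : i ∈ DescentSet n σ := by rw [hσ.2]; exact Finset.mem_singleton_self i
  exact (Finset.mem_filter.1 this).2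

lemma chain (hσ : σ ∈ DSn n {i}) :
    ∀ b a : ℕ, 1 ≤ a → a ≤ b → b ≤ n → (∀ j, a ≤ j → j < b → j ≠ i) →
      σ a + (b - a) ≤ σ b := by
  intro b
  induction b with
  | zero => intro a h1 h2 _ _; omega
  | succ b ih =>
    intro a h1 h2 h3 h4
    rcases Nat.eq_or_lt_of_le h2 with h | hlt
    · subst h; omega
    · have := ih a h1 (by omega) (by omega) (fun j hj1 hj2 => h4 j hj1 (by omega))
      have hs := step_lt hσ (by omega) h3 (h4 b (by omega) (by omega))
      omega

lemma lb_left (hσ : σ ∈ DSn n {i}) (hin : i ≤ n) {j : ℕ} (h1 : 1 ≤ j) (h2 : j ≤ i) :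
    j ≤ σ j := by
  have h := chain hσ j 1 le_rfl h1 (by omega) (fun k hk1 hk2 => by omega)
  have := (bnds (j := 1) hσ le_rfl (by omega)).1
  omega

lemma ub_left (hσ : σ ∈ DSn n {i}) (hin : i ≤ n) {j : ℕ} (h1 : 1 ≤ j) (h2 : j ≤ i) :
    σ j ≤ n - i + j := by
  have h := chain hσ i j h1 h2 hin (fun k hk1 hk2 => by omega)
  have := (bnds (j := i) hσ (by omega) hin).2
  omega

lemma ub_right (hσ : σ ∈ DSn n {i}) {j : ℕ} (h1 : i + 1 ≤ j) (h2 : j ≤ n) :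
    σ j ≤ j := by
  have h := chain hσ n j (by omega) h2 le_rfl (fun k hk1 hk2 => by omega)
  have := (bnds (j := n) hσ (by omega) le_rfl).2
  omega

lemma lb_right (hσ : σ ∈ DSn n {i}) {j : ℕ} (h1 : i + 1 ≤ j) (h2 : j ≤ n) :
    j - i ≤ σ j := by
  have h := chain hσ j (i + 1) (by omega) h1 h2 (fun k hk1 hk2 => by omega)
  have := (bnds (j := i + 1) hσ (by omega) (by omega)).1
  omega

lemma sigma_i (hσ : σ ∈ DSn n {i}) (hi1 : 1 ≤ i) (hi2 : i + 1 ≤ n) : i + 1 ≤ σ i := by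
  by_contra hc
  push_neg at hc
  have hlb := lb_left hσ (by omega) hi1 le_rfl
  have hii : σ i = i := by omega
  have hfix : ∀ j, 1 ≤ j → j ≤ i → σ j = j := fun j hj1 hj2 => by
    have h1 := lb_left hσ (by omega) hj1 hj2
    have h2 := chain hσ i j hj1 hj2 (by omega) (fun k hk1 hk2 => by omega)
    omega
  have hd := desc_i hσ
  have hk1 := (bnds (j := i + 1) hσ (by omega) hi2).1
  have hk := hfix (σ (i + 1)) hk1 (by omega)
  have := inj hσ hk1 (by omega) (by omega) hi2 hk
  omega

lemma sigma_i1 (hσ : σ ∈ DSn n {i}) (hi1 : 1 ≤ i) (hi2 : i + 1 ≤ n) : σ (i + 1) ≤ i := by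
  by_contra hc
  push_neg at hc
  have hub := ub_right hσ le_rfl hi2
  have hii : σ (i + 1) = i + 1 := by omega
  have hfix : ∀ j, i + 1 ≤ j → j ≤ n → σ j = j := fun j hj1 hj2 => by
    have h1 := ub_right hσ hj1 hj2
    have h2 := chain hσ j (i + 1) (by omega) hj1 hj2 (fun k hk1 hk2 => by omega)
    omega
  have hd := desc_i hσ
  have hk2 := (bnds (j := i) hσ hi1 (by omega)).2
  have hk := hfix (σ i) (by omega) hk2
  have := inj hσ (by omega) hk2 hi1 (by omega) hk
  omega

lemma sup_bound (hi1 : 1 ≤ i) (hi2 : i + 1 ≤ n)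
    (hσ : σ ∈ DSn n {i}) (hρ : ρ ∈ DSn n {i}) {B : ℕ}
    (h1 : 2 ≤ i → n - i ≤ B) (h2 : n - i - 1 ≤ B) (h3 : i - 1 ≤ B)
    (h4 : i + 2 ≤ n → i ≤ B) :
    dLinf n σ ρ ≤ B := by
  unfold dLinf
  refine Finset.sup_le fun j hj => ?_
  rw [Finset.mem_Icc] at hj
  obtain ⟨hj1, hj2⟩ := hj
  rcases lt_trichotomy j i with h | h | h
  · have a1 := lb_left hσ (by omega) hj1 (by omega)
    have a2 := ub_left hσ (by omega) hj1 (by omega)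
    have b1 := lb_left hρ (by omega) hj1 (by omega)
    have b2 := ub_left hρ (by omega) hj1 (by omega)
    have := h1 (by omega)
    omega
  · subst h
    have a1 := sigma_i hσ hi1 hi2
    have a2 := (bnds hσ hi1 (by omega)).2
    have b1 := sigma_i hρ hi1 hi2
    have b2 := (bnds hρ hi1 (by omega)).2
    omega
  · rcases Nat.lt_or_ge j (i + 2) with h' | h'
    · have hji : j = i + 1 := by omega
      subst hji
      have a1 := sigma_i1 hσ hi1 hi2
      have a2 := (bnds (j := i + 1) hσ (by omega) (by omega)).1
      have b1 := sigma_i1 hρ hi1 hi2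
      have b2 := (bnds (j := i + 1) hρ (by omega) (by omega)).1
      omega
    · have a1 := lb_right hσ (by omega) hj2
      have a2 := ub_right hσ (by omega) hj2
      have b1 := lb_right hρ (by omega) hj2
      have b2 := ub_right hρ (by omega) hj2
      have := h4 (by omega)
      omega

/-- The block rotation `(n-i+1, …, n, 1, …, n-i)`. -/
def sigF (n i : ℕ) : ℕ → ℕ := fun j => if j ≤ i then n - i + j else j - i

/-- The adjacent transposition of `i` and `i+1` in the identity. -/
def rhoF (i : ℕ) : ℕ → ℕ := fun j => if j = i then i + 1 else if j = i + 1 then i else j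

lemma sigF_mem (hi1 : 1 ≤ i) (hi2 : i + 1 ≤ n) : sigF n i ∈ DSn n {i} := by
  constructor
  · refine ⟨?_, ?_, ?_⟩
    · intro j hj
      simp only [Set.mem_Icc] at hj ⊢
      simp only [sigF]
      split_ifs <;> omega
    · intro a ha b hb hab
      simp only [Set.mem_Icc] at ha hb
      simp only [sigF] at hab
      split_ifs at hab <;> omega
    · intro y hy
      simp only [Set.mem_Icc] at hy
      by_cases hc : y ≤ n - i
      · exact ⟨y + i, Set.mem_Icc.2 ⟨by omega, by omega⟩,
          by simp only [sigF]; split_ifs <;> omega⟩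
      · exact ⟨y + i - n, Set.mem_Icc.2 ⟨by omega, by omega⟩,
          by simp only [sigF]; split_ifs <;> omega⟩
  · ext j
    rw [DescentSet, Finset.mem_filter]
    simp only [DescentSet, Finset.mem_filter, Finset.mem_Icc, Finset.mem_singleton, sigF]
    constructor
    · rintro ⟨⟨hj1, hj2⟩, h3⟩
      split_ifs at h3 <;> omega
    · rintro rfl
      refine ⟨⟨hi1, by omega⟩, ?_⟩
      split_ifs <;> omega

lemma rhoF_mem (hi1 : 1 ≤ i) (hi2 : i + 1 ≤ n) : rhoF i ∈ DSn n {i} := by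
  constructor
  · refine ⟨?_, ?_, ?_⟩
    · intro j hj
      simp only [Set.mem_Icc] at hj ⊢
      simp only [rhoF]
      split_ifs <;> omega
    · intro a ha b hb hab
      simp only [Set.mem_Icc] at ha hb
      simp only [rhoF] at hab
      split_ifs at hab <;> omega
    · intro y hy
      simp only [Set.mem_Icc] at hy
      by_cases h1 : y = i + 1
      · exact ⟨i, Set.mem_Icc.2 ⟨hi1, by omega⟩,
          by simp only [rhoF]; split_ifs <;> omega⟩
      · by_cases h2 : y = i
        · exact ⟨i + 1, Set.mem_Icc.2 ⟨by omega, hi2⟩,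
            by simp only [rhoF]; split_ifs <;> omega⟩
        · exact ⟨y, Set.mem_Icc.2 ⟨hy.1, hy.2⟩,
            by simp only [rhoF]; split_ifs <;> omega⟩
  · ext j
    rw [DescentSet, Finset.mem_filter]
    simp only [DescentSet, Finset.mem_filter, Finset.mem_Icc, Finset.mem_singleton, rhoF]
    constructor
    · rintro ⟨⟨hj1, hj2⟩, h3⟩
      split_ifs at h3 <;> omega
    · rintro rfl
      refine ⟨⟨hi1, by omega⟩, ?_⟩
      split_ifs <;> omega

lemma dlinf_ge {n X j₀ : ℕ} {σ ρ : ℕ → ℕ} (hj : 1 ≤ j₀ ∧ j₀ ≤ n)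
    (h : X ≤ ((σ j₀ : ℤ) - ρ j₀).natAbs) : X ≤ dLinf n σ ρ :=
  le_trans h (Finset.le_sup (f := fun j => ((σ j : ℤ) - (ρ j : ℤ)).natAbs)
    (Finset.mem_Icc.2 hj))

lemma dlinf_le {n X : ℕ} {σ ρ : ℕ → ℕ}
    (h : ∀ j, 1 ≤ j → j ≤ n → ((σ j : ℤ) - ρ j).natAbs ≤ X) : dLinf n σ ρ ≤ X :=
  Finset.sup_le fun j hj => h j (Finset.mem_Icc.1 hj).1 (Finset.mem_Icc.1 hj).2

lemma mem_helper (hi1 : 1 ≤ i) (hi2 : i + 1 ≤ n) (hn : 6 ≤ n) {X : ℕ}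
    (hle : X ≤ dLinf n (sigF n i) (rhoF i))
    (hge : dLinf n (sigF n i) (rhoF i) ≤ X) :
    ∃ σ ∈ DSn n {i}, ∃ ρ ∈ DSn n {i}, DistinctOn n σ ρ ∧ X = dLinf n σ ρ := by
  refine ⟨sigF n i, sigF_mem hi1 hi2, rhoF i, rhoF_mem hi1 hi2,
    ⟨1, Set.mem_Icc.2 ⟨le_rfl, by omega⟩, ?_⟩, le_antisymm hle hge⟩
  simp only [sigF, rhoF]
  split_ifs <;> omega

end Stmt10Aux

open Stmt10Aux in
/-- Maximum `ℓ∞` distance over `D({i};n)` for `n ≥ 6`: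
`n-2` if `i = 1` or `i = n-1`; `n-i` if `2 ≤ i ≤ ⌊n/2⌋`; `i` if `⌈n/2⌉ ≤ i ≤ n-2`. -/
theorem stmt10 (n i : ℕ) (hn : 6 ≤ n) (hi1 : 1 ≤ i) (hi2 : i ≤ n - 1) :
    ((i = 1 ∨ i = n - 1) →
      IsGreatest {d : ℕ | ∃ σ ∈ DSn n {i}, ∃ ρ ∈ DSn n {i},
        DistinctOn n σ ρ ∧ d = dLinf n σ ρ} (n - 2)) ∧
    (2 ≤ i ∧ i ≤ n / 2 →
      IsGreatest {d : ℕ | ∃ σ ∈ DSn n {i}, ∃ ρ ∈ DSn n {i},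
        DistinctOn n σ ρ ∧ d = dLinf n σ ρ} (n - i)) ∧
    ((n + 1) / 2 ≤ i ∧ i ≤ n - 2 →
      IsGreatest {d : ℕ | ∃ σ ∈ DSn n {i}, ∃ ρ ∈ DSn n {i},
        DistinctOn n σ ρ ∧ d = dLinf n σ ρ} i) := by
  have hi2' : i + 1 ≤ n := by omega
  refine ⟨?_, ?_, ?_⟩
  · rintro (h | h) <;> subst h
    · -- i = 1
      constructor
      · refine mem_helper le_rfl (by omega) hn
          (dlinf_ge (j₀ := 1) ⟨le_rfl, by omega⟩ ?_) (dlinf_le fun j hj1 hj2 => ?_)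
        · simp only [sigF, rhoF]; split_ifs <;> omega
        · simp only [sigF, rhoF]; split_ifs <;> omega
      · rintro d ⟨σ, hσ, ρ, hρ, -, rfl⟩
        exact sup_bound le_rfl (by omega) hσ hρ
          (fun h => by omega) (by omega) (by omega) (fun h => by omega)
    · -- i = n - 1
      constructor
      · refine mem_helper (by omega) (by omega) hn
          (dlinf_ge (j₀ := n) ⟨by omega, le_rfl⟩ ?_) (dlinf_le fun j hj1 hj2 => ?_)
        · simp only [sigF, rhoF]; split_ifs <;> omega
        · simp only [sigF, rhoF]; split_ifs <;> omega
      · rintro d ⟨σ, hσ, ρ, hρ, -, rfl⟩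
        exact sup_bound (by omega) (by omega) hσ hρ
          (fun h => by omega) (by omega) (by omega) (fun h => by omega)
  · rintro ⟨hc1, hc2⟩
    constructor
    · refine mem_helper hi1 hi2' hn
        (dlinf_ge (j₀ := 1) ⟨le_rfl, by omega⟩ ?_) (dlinf_le fun j hj1 hj2 => ?_)
      · simp only [sigF, rhoF]; split_ifs <;> omega
      · simp only [sigF, rhoF]; split_ifs <;> omega
    · rintro d ⟨σ, hσ, ρ, hρ, -, rfl⟩
      exact sup_bound hi1 hi2' hσ hρ
        (fun h => by omega) (by omega) (by omega) (fun h => by omega)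
  · rintro ⟨hc1, hc2⟩
    constructor
    · refine mem_helper hi1 hi2' hn
        (dlinf_ge (j₀ := i + 2) ⟨by omega, by omega⟩ ?_) (dlinf_le fun j hj1 hj2 => ?_)
      · simp only [sigF, rhoF]; split_ifs <;> omega
      · simp only [sigF, rhoF]; split_ifs <;> omega
    · rintro d ⟨σ, hσ, ρ, hρ, -, rfl⟩
      exact sup_bound hi1 hi2' hσ hρ
        (fun h => by omega) (by omega) (by omega) (fun h => by omega)
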